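/- The Demazure–Lusztig operator is well defined and gives the polynomial representation of the type A₁ double affine Hecke algebra: for every f ∈ 𝒳 the element s(f) − f is divisible by X² − 1 with a unique quotient g_f, and the operators satisfy the identities (T − t^{1/2})∘(T + t^{−1/2}) = 0, T∘X∘T = (multiplication by X⁻¹), π∘π = id, and π∘X∘π = q^{1/2}·(multiplication by X⁻¹); consequently T is invertible and Y = π∘T satisfies T⁻¹∘Y∘T⁻¹ = Y⁻¹ and q^{1/2}·(Y⁻¹∘X⁻¹∘Y∘X∘T∘T) = id as operators on 𝒳. -/

import Mathlib

open LaurentPolynomial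

private lemma laurent_reg {R : Type*} [CommRing R] (g : LaurentPolynomial R)
    (h : (T 2 - 1) * g = 0) : g = 0 := by
  obtain ⟨n, p, hp⟩ := g.exists_T_pow
  have key : Polynomial.toLaurent ((Polynomial.X ^ 2 - 1) * p) = 0 := by
    rw [map_mul, map_sub, map_one, map_pow, Polynomial.toLaurent_X, hp, T_pow]
    norm_num
    calc (T 2 - 1) * (g * T (n : ℤ)) = ((T 2 - 1) * g) * T (n : ℤ) := by ring
    _ = 0 := by rw [h, zero_mul]
  have hp0 : (Polynomial.X ^ 2 - 1 : Polynomial R) * p = 0 := by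
    apply Polynomial.toLaurent_injective
    rw [key, map_zero]
  have hm : (Polynomial.X ^ 2 - 1 : Polynomial R).Monic := by
    simpa using Polynomial.monic_X_pow_sub_C (1 : R) (two_ne_zero)
  have hpz : p = 0 := hm.isRegular.left (show (Polynomial.X ^ 2 - 1) * p = (Polynomial.X ^ 2 - 1) * 0 by rw [hp0, mul_zero])
  have : g * T (n : ℤ) = 0 := by rw [← hp, hpz, map_zero]
  calc g = g * T (n : ℤ) * T (-(n:ℤ)) := by
        rw [mul_T_assoc, add_neg_cancel, T_zero, mul_one]
  _ = 0 := by rw [this, zero_mul]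

private lemma laurent_cancel {R : Type*} [CommRing R] {g₁ g₂ : LaurentPolynomial R}
    (h : (T 2 - 1) * g₁ = (T 2 - 1) * g₂) : g₁ = g₂ := by
  have := laurent_reg (g₁ - g₂) (by rw [mul_sub, h, sub_self])
  exact sub_eq_zero.mp this

private lemma laurent_smul_eq {R : Type*} [CommRing R] (r : R) (x : LaurentPolynomial R) :
    r • x = C r * x := by
  rw [C_eq_algebraMap, ← Algebra.smul_def]

private lemma laurent_lhom_ext {R : Type*} [CommRing R] {M : Type*} [AddCommMonoid M] [Module R M]
    {φ ψ : LaurentPolynomial R →ₗ[R] M} (h : ∀ n : ℤ, φ (T n) = ψ (T n)) : φ = ψ := by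
  apply LinearMap.ext
  intro f
  induction f using LaurentPolynomial.induction_on' with
  | add p q hp hq => rw [map_add, map_add, hp, hq]
  | C_mul_T n a => rw [← laurent_smul_eq, map_smul, map_smul, h]

private lemma exists_g_nat {R : Type*} [CommRing R] (n : ℕ) :
    ∃ g : LaurentPolynomial R, (T 2 - 1) * g = T (n : ℤ) - T (-(n : ℤ)) := by
  induction n with
  | zero => exact ⟨0, by simp⟩
  | succ n ih =>
      obtain ⟨g, hg⟩ := ih
      refine ⟨T (-1) * (T (n : ℤ) + g), ?_⟩
      have e1 : ((n : ℕ) + 1 : ℤ) = -1 + ((n : ℤ) + 2) := by ring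
      have e2 : (-(((n : ℕ) : ℤ) + 1) : ℤ) = -1 + -(n : ℤ) := by ring
      push_cast
      calc (T 2 - 1) * (T (-1) * (T (n:ℤ) + g))
          = T (-1) * (T (n:ℤ) * T 2) - T (-1) * T (n:ℤ) + T (-1) * ((T 2 - 1) * g) := by ring
        _ = T (-1) * (T (n:ℤ) * T 2) - T (-1) * T (n:ℤ)
              + (T (-1) * T (n:ℤ) - T (-1) * T (-(n:ℤ))) := by rw [hg]; ring
        _ = T ((n:ℤ) + 1) - T (-((n:ℤ) + 1)) := by
              rw [show (-((n:ℤ) + 1)) = -1 + -(n:ℤ) from by ring,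
                show ((n:ℤ) + 1) = -1 + ((n:ℤ) + 2) from by ring]
              simp only [T_add]
              ring

private lemma exists_g_int {R : Type*} [CommRing R] (z : ℤ) :
    ∃ g : LaurentPolynomial R, (T 2 - 1) * g = T (-z) - T z := by
  obtain ⟨n, hn | hn⟩ := z.eq_nat_or_neg
  · obtain ⟨g, hg⟩ := exists_g_nat (R := R) n
    exact ⟨-g, by subst hn; rw [mul_neg, hg]; ring⟩
  · obtain ⟨g, hg⟩ := exists_g_nat (R := R) n
    exact ⟨g, by subst hn; rw [neg_neg]; exact hg⟩


/-- The Demazure–Lusztig operator is well defined and gives the polynomial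
representation of the type `A₁` double affine Hecke algebra. Here `s`, `π` are the
`R`-linear operators on `𝒳 = R[X,X⁻¹]` with `s(Xⁿ) = X⁻ⁿ`, `π(Xⁿ) = q^{n/2}X⁻ⁿ`,
and `TT` is the Demazure–Lusztig operator, encoded by the hypothesis `hT` which says
`(X² − 1)·(TT f − t^{1/2}·s f) = (t^{1/2} − t^{−1/2})·(s f − f)` (equivalently
`TT f = t^{1/2} s f + (t^{1/2} − t^{−1/2}) g_f` with `(X²−1) g_f = s f − f`). -/
theorem stmt0 (R : Type*) [CommRing R] (q2 t2 : Rˣ)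
    (s π TT : Module.End R (LaurentPolynomial R))
    (hs : ∀ n : ℤ, s (T n) = T (-n))
    (hπ : ∀ n : ℤ, π (T n) = ((q2 ^ n : Rˣ) : R) • T (-n))
    (hT : ∀ f : LaurentPolynomial R,
      (T 2 - 1) * (TT f - (t2 : R) • s f) =
        ((t2 : R) - ((t2⁻¹ : Rˣ) : R)) • (s f - f)) :
    -- for every f, s f − f is divisible by X² − 1 with a unique quotient
    (∀ f : LaurentPolynomial R, ∃! g : LaurentPolynomial R, (T 2 - 1) * g = s f - f) ∧
    -- (T − t^{1/2}) ∘ (T + t^{−1/2}) = 0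
    (TT - (t2 : R) • (1 : Module.End R (LaurentPolynomial R))) *
        (TT + ((t2⁻¹ : Rˣ) : R) • (1 : Module.End R (LaurentPolynomial R))) = 0 ∧
    -- T ∘ X ∘ T = multiplication by X⁻¹
    TT * (LinearMap.mulLeft R (T 1) : Module.End R (LaurentPolynomial R)) * TT =
      (LinearMap.mulLeft R (T (-1)) : Module.End R (LaurentPolynomial R)) ∧
    -- π ∘ π = id
    π * π = 1 ∧
    -- π ∘ X ∘ π = q^{1/2} · multiplication by X⁻¹
    π * (LinearMap.mulLeft R (T 1) : Module.End R (LaurentPolynomial R)) * π =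
      (q2 : R) • (LinearMap.mulLeft R (T (-1)) : Module.End R (LaurentPolynomial R)) ∧
    -- T is invertible, and Y = π ∘ T satisfies the remaining relations
    (∃ Ti : Module.End R (LaurentPolynomial R), Ti * TT = 1 ∧ TT * Ti = 1 ∧
      ∃ Yi : Module.End R (LaurentPolynomial R),
        Yi * (π * TT) = 1 ∧ (π * TT) * Yi = 1 ∧
        Ti * (π * TT) * Ti = Yi ∧
        (q2 : R) • (Yi * (LinearMap.mulLeft R (T (-1)) : Module.End R (LaurentPolynomial R)) *
          (π * TT) * (LinearMap.mulLeft R (T 1) : Module.End R (LaurentPolynomial R)) *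
          TT * TT) = 1) := by
  set a : R := (t2 : R) with ha
  set b : R := ((t2⁻¹ : Rˣ) : R) with hb
  have hab : a * b = 1 := by rw [ha, hb, ← Units.val_mul, mul_inv_cancel, Units.val_one]
  have habC : (C a : LaurentPolynomial R) * C b = 1 := by rw [← map_mul, hab, map_one]
  -- s on products with T n
  have hmulT_s : ∀ (n : ℤ) (f : LaurentPolynomial R), s (T n * f) = T (-n) * s f := by
    intro n f
    have : (s ∘ₗ LinearMap.mulLeft R (T n) : Module.End R (LaurentPolynomial R))
        = (LinearMap.mulLeft R (T (-n)) ∘ₗ s) := by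
      apply laurent_lhom_ext
      intro m
      simp only [LinearMap.comp_apply, LinearMap.mulLeft_apply, ← T_add, hs]
      congr 1; ring
    exact DFunLike.congr_fun this f
  have hmulT_π : ∀ (n : ℤ) (f : LaurentPolynomial R),
      π (T n * f) = ((q2 ^ n : Rˣ) : R) • (T (-n) * π f) := by
    intro n f
    have : (π ∘ₗ LinearMap.mulLeft R (T n) : Module.End R (LaurentPolynomial R))
        = ((q2 ^ n : Rˣ) : R) • (LinearMap.mulLeft R (T (-n)) ∘ₗ π) := by
      apply laurent_lhom_ext
      intro m
      simp only [LinearMap.comp_apply, LinearMap.mulLeft_apply, LinearMap.smul_apply, ← T_add,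
        hs, hπ, mul_smul_comm, smul_smul, ← Units.val_mul, ← zpow_add]
      congr 2
      ring
    exact DFunLike.congr_fun this f
  have hss : ∀ f : LaurentPolynomial R, s (s f) = f := by
    intro f
    have : (s ∘ₗ s : Module.End R (LaurentPolynomial R)) = LinearMap.id := by
      apply laurent_lhom_ext
      intro m
      simp [hs]
    exact DFunLike.congr_fun this f
  -- main pointwise identities
  have h1 : ∀ f : LaurentPolynomial R,
      (T 2 - 1) * TT f = C a * ((T 2 - 1) * s f) + (C a - C b) * (s f - f) := by
    intro f
    have e := hT f
    rw [laurent_smul_eq, laurent_smul_eq, map_sub] at e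
    linear_combination e
  have hT2 : (T 2 : LaurentPolynomial R) * T (-2) = 1 := by
    rw [← T_add]; norm_num
  have h2 : ∀ f : LaurentPolynomial R,
      (T 2 - 1) * s (TT f) = C a * ((T 2 - 1) * f) + (C a - C b) * (T 2 * (s f - f)) := by
    intro f
    have e := hT f
    rw [sub_mul, one_mul] at e
    have e2 := congrArg s e
    simp only [map_sub, map_smul, hmulT_s, hss] at e2
    -- e2 : T (-2) * s (TT f - a • s f)... need to check exact shape
    rw [laurent_smul_eq, laurent_smul_eq, map_sub] at e2
    linear_combination (-(T 2 : LaurentPolynomial R)) * e2 + (s (TT f) - C a * f) * hT2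
  -- quadratic pointwise
  have hq : ∀ f : LaurentPolynomial R, TT (TT f) = (C a - C b) * TT f + f := by
    intro f
    apply laurent_cancel
    apply laurent_cancel
    linear_combination (C b * T 2 - C a * T 2) * h1 f + (C a * T 2 - C b) * h2 f
      + ((T 2 : LaurentPolynomial R) - 1) * h1 (TT f)
      + (f * ((T 2 : LaurentPolynomial R) - 1) ^ 2) * habC
  have htxt : ∀ f : LaurentPolynomial R, TT (T 1 * TT f) = T (-1) * f := by
    intro f
    have h3p := h1 (T 1 * TT f)
    rw [hmulT_s] at h3p
    have hw : (T 2 : LaurentPolynomial R) = T 1 * T 1 := by rw [← T_add]; norm_num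
    have hv : (T 1 : LaurentPolynomial R) * T (-1) = 1 := by rw [← T_add]; norm_num
    apply laurent_cancel
    apply laurent_cancel
    linear_combination ((C b - C a) * (T 1 : LaurentPolynomial R)) * h1 f
      + (C a * T 2 * T (-1) - C b * (T (-1) : LaurentPolynomial R)) * h2 f
      + ((T 2 : LaurentPolynomial R) - 1) * h3p
      + (-(C a) ^ 2 * f * (T (-1)) + (C a) ^ 2 * (s f) * (T 2) * (T (-1)) + (C a) ^ 2 * (s f) * (T 1) ^ 2 * (T (-1)) - (C a) ^ 2 * (s f) * (T 1) + (C a) * (C b) * f * (T 2) * (T (-1)) + (C a) * (C b) * f * (T 1) ^ 2 * (T (-1)) - (C a) * (C b) * (s f) * (T 2) * (T (-1)) - (C a) * (C b) * (s f) * (T 1) ^ 2 * (T (-1)) + (C a) * (C b) * (s f) * (T 1) - (C a) * (C b) * (s f) * (T (-1)) - (C b) ^ 2 * f * (T (-1)) + (C b) ^ 2 * (s f) * (T (-1)) - f * (T 2) * (T (-1)) - f * (T 1) ^ 2 * (T (-1)) + 2 * f * (T (-1))) * hw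
      + (-(C a) ^ 2 * f * (T 1) + (C a) ^ 2 * (s f) * (T 1) ^ 3 + (C a) * (C b) * f * (T 1) ^ 3 - (C a) * (C b) * (s f) * (T 1) ^ 3 - (C a) * (C b) * (s f) * (T 1) - (C b) ^ 2 * f * (T 1) + (C b) ^ 2 * (s f) * (T 1) - f * (T 1) ^ 3 + 2 * f * (T 1)) * hv
      + (f * (T 1) ^ 3 + (-2) * f * (T 1) + f * (T (-1))) * habC
  have hππ : π * π = 1 := by
    apply laurent_lhom_ext
    intro n
    simp only [Module.End.mul_apply, Module.End.one_apply, hπ, map_smul, smul_smul,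
      ← Units.val_mul, ← zpow_add, add_neg_cancel, zpow_zero, Units.val_one, one_smul, neg_neg]
  have hπXπ : π * (LinearMap.mulLeft R (T 1) : Module.End R (LaurentPolynomial R)) * π =
      (q2 : R) • (LinearMap.mulLeft R (T (-1)) : Module.End R (LaurentPolynomial R)) := by
    apply laurent_lhom_ext
    intro n
    simp only [Module.End.mul_apply, LinearMap.smul_apply, LinearMap.mulLeft_apply, hπ,
      mul_smul_comm, map_smul, ← T_add, smul_smul, ← Units.val_mul, ← zpow_add]
    rw [show n + (1 + -n) = 1 from by ring, show (-(1 + -n)) = -1 + n from by ring, zpow_one]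
  have hπvπ : π * (LinearMap.mulLeft R (T (-1)) : Module.End R (LaurentPolynomial R)) * π =
      ((q2⁻¹ : Rˣ) : R) • (LinearMap.mulLeft R (T 1) : Module.End R (LaurentPolynomial R)) := by
    apply laurent_lhom_ext
    intro n
    simp only [Module.End.mul_apply, LinearMap.smul_apply, LinearMap.mulLeft_apply, hπ,
      mul_smul_comm, map_smul, ← T_add, smul_smul, ← Units.val_mul, ← zpow_add]
    rw [show n + (-1 + -n) = -1 from by ring, show (-(-1 + -n)) = 1 + n from by ring,
      zpow_neg_one]
  have hquadOp : (TT - a • (1 : Module.End R (LaurentPolynomial R))) *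
      (TT + b • (1 : Module.End R (LaurentPolynomial R))) = 0 := by
    apply LinearMap.ext; intro f
    simp only [Module.End.mul_apply, LinearMap.sub_apply, LinearMap.add_apply,
      LinearMap.smul_apply, Module.End.one_apply, LinearMap.zero_apply, map_add, map_smul]
    rw [hq f]
    simp only [laurent_smul_eq]
    linear_combination (-f) * habC
  have hTXTop : TT * (LinearMap.mulLeft R (T 1) : Module.End R (LaurentPolynomial R)) * TT =
      (LinearMap.mulLeft R (T (-1)) : Module.End R (LaurentPolynomial R)) := by
    apply LinearMap.ext; intro f
    simp only [Module.End.mul_apply, LinearMap.mulLeft_apply]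
    exact htxt f
  have hq2 : TT * TT = (a - b) • TT + 1 := by
    apply LinearMap.ext; intro f
    simp only [Module.End.mul_apply, LinearMap.add_apply, LinearMap.smul_apply,
      Module.End.one_apply]
    rw [hq f, laurent_smul_eq, map_sub]
  have hTi1 : (TT - (a - b) • (1 : Module.End R (LaurentPolynomial R))) * TT = 1 := by
    rw [sub_mul, hq2, smul_mul_assoc, one_mul]
    abel
  have hTi2 : TT * (TT - (a - b) • (1 : Module.End R (LaurentPolynomial R))) = 1 := by
    rw [mul_sub, hq2, mul_smul_comm, mul_one]
    abel
  have hw1v : (LinearMap.mulLeft R (T 1) : Module.End R (LaurentPolynomial R)) *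
      LinearMap.mulLeft R (T (-1)) = 1 := by
    apply LinearMap.ext; intro f
    simp only [Module.End.mul_apply, LinearMap.mulLeft_apply, Module.End.one_apply,
      ← mul_assoc, ← T_add]
    norm_num
  refine ⟨fun f => ?_, hquadOp, hTXTop, hππ, hπXπ,
    TT - (a - b) • 1, hTi1, hTi2, (TT - (a - b) • 1) * π, ?_, ?_, ?_, ?_⟩
  · -- existence and uniqueness of the quotient
    have hex : ∃ g : LaurentPolynomial R, (T 2 - 1) * g = s f - f := by
      induction f using LaurentPolynomial.induction_on' with
      | add p q hp hq' =>
          obtain ⟨g1, e1⟩ := hp; obtain ⟨g2, e2⟩ := hq'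
          exact ⟨g1 + g2, by rw [map_add, mul_add, e1, e2]; ring⟩
      | C_mul_T n r =>
          obtain ⟨g, e⟩ := exists_g_int (R := R) n
          refine ⟨r • g, ?_⟩
          have hsC : s (C r * T n) = C r * T (-n) := by
            rw [← laurent_smul_eq, map_smul, hs, laurent_smul_eq]
          calc (T 2 - 1) * (r • g) = r • ((T 2 - 1) * g) := by rw [mul_smul_comm]
            _ = r • (T (-n) - T n) := by rw [e]
            _ = s (C r * T n) - C r * T n := by rw [hsC, laurent_smul_eq, mul_sub]
    obtain ⟨g, hg⟩ := hex
    exact ⟨g, hg, fun g' hg' => laurent_cancel (hg'.trans hg.symm)⟩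
  · have e : (TT - (a - b) • (1 : Module.End R (LaurentPolynomial R))) * π * (π * TT)
        = (TT - (a - b) • 1) * (π * π) * TT := by noncomm_ring
    rw [e, hππ, mul_one, hTi1]
  · have e : (π * TT) * ((TT - (a - b) • (1 : Module.End R (LaurentPolynomial R))) * π)
        = π * (TT * (TT - (a - b) • 1)) * π := by noncomm_ring
    rw [e, hTi2, mul_one, hππ]
  · have e : (TT - (a - b) • (1 : Module.End R (LaurentPolynomial R))) * (π * TT) *
        (TT - (a - b) • 1)
        = ((TT - (a - b) • 1) * π) * (TT * (TT - (a - b) • 1)) := by noncomm_ring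
    rw [e, hTi2, mul_one]
  · have e : (TT - (a - b) • (1 : Module.End R (LaurentPolynomial R))) * π *
        (LinearMap.mulLeft R (T (-1)) : Module.End R (LaurentPolynomial R)) * (π * TT) *
        (LinearMap.mulLeft R (T 1) : Module.End R (LaurentPolynomial R)) * TT * TT
        = (TT - (a - b) • 1) *
          (π * (LinearMap.mulLeft R (T (-1)) : Module.End R (LaurentPolynomial R)) * π) *
          (TT * (LinearMap.mulLeft R (T 1) : Module.End R (LaurentPolynomial R)) * TT) * TT := by
      noncomm_ring
    rw [e, hπvπ, hTXTop, mul_smul_comm, smul_mul_assoc, smul_mul_assoc, smul_smul]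
    have e2 : (TT - (a - b) • (1 : Module.End R (LaurentPolynomial R))) *
        (LinearMap.mulLeft R (T 1) : Module.End R (LaurentPolynomial R)) *
        (LinearMap.mulLeft R (T (-1)) : Module.End R (LaurentPolynomial R)) * TT
        = (TT - (a - b) • 1) *
          ((LinearMap.mulLeft R (T 1) : Module.End R (LaurentPolynomial R)) *
            (LinearMap.mulLeft R (T (-1)))) * TT := by noncomm_ring
    rw [e2, hw1v, mul_one, hTi1,
      show (q2 : R) * ((q2⁻¹ : Rˣ) : R) = 1 from by
        rw [← Units.val_mul, mul_inv_cancel, Units.val_one],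
      one_smul]
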